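/- Let D ⊆ ℂ^d be a domain with the Liouville Property. Then for every z₀ ∈ D, every compact K ⊆ D with z₀ ∈ K, and every ε > 0 there exists a compact K₁ ⊆ D such that sup_K |f − f(z₀)| ≤ ε · sup_{K₁} Re(f(z) − f(z₀)) for every function f analytic on some open neighborhood of K₁. -/

import Mathlib

open Filter Topology Metric

/-- `ℂ^d` with the Euclidean norm. -/
abbrev Cd (d : ℕ) := EuclideanSpace ℂ (Fin d)

variable {E : Type*} [NormedAddCommGroup E] [NormedSpace ℂ E]

/-- `supNorm f K = sup_{z ∈ K} |f z|`. -/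
noncomputable def supNorm (f : E → ℂ) (K : Set E) : ℝ :=
  sSup ((fun z => ‖f z‖) '' K)

/-- The series `∑ cₙ φₙ` converges to `f` uniformly on every compact subset of `D`. -/
def ExpandsTo (φ : ℕ → E → ℂ) (c : ℕ → ℂ) (f : E → ℂ) (D : Set E) : Prop :=
  ∀ K : Set E, K ⊆ D → IsCompact K →
    TendstoUniformlyOn (fun N z => ∑ n ∈ Finset.range N, c n * φ n z) f atTop K

/-- `φ` is a basis of the space of analytic functions on `D`: each `φₙ` is analytic on `D`
and every analytic function on `D` has a unique expansion converging uniformly on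
compact subsets of `D`. -/
def IsBasisOn (φ : ℕ → E → ℂ) (D : Set E) : Prop :=
  (∀ n, DifferentiableOn ℂ (φ n) D) ∧
    ∀ f : E → ℂ, DifferentiableOn ℂ f D → ∃! c : ℕ → ℂ, ExpandsTo φ c f D

/-- The Global Bohr Property of a basis `φ`, relative to `D`. -/
def HasGBP (φ : ℕ → E → ℂ) (D : Set E) : Prop :=
  ∀ K : Set E, K ⊆ D → IsCompact K →
    ∃ K₁ : Set E, K₁ ⊆ D ∧ IsCompact K₁ ∧ K ⊆ K₁ ∧
      ∀ (f : E → ℂ) (c : ℕ → ℂ), DifferentiableOn ℂ f D → ExpandsTo φ c f D →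
        ∀ N : ℕ, ∑ n ∈ Finset.range N, ‖c n‖ * supNorm (φ n) K ≤ supNorm f K₁

/-- Every bounded analytic function on `D` is constant. -/
def LiouvilleProperty (D : Set E) : Prop :=
  ∀ f : E → ℂ, DifferentiableOn ℂ f D → (∃ M : ℝ, ∀ z ∈ D, ‖f z‖ ≤ M) →
    ∀ z ∈ D, ∀ w ∈ D, f z = f w

/-- The Schwarz Property of a domain `D`. -/
def SchwarzProperty (D : Set E) : Prop :=
  ∀ z₀ ∈ D, ∀ K : Set E, K ⊆ D → IsCompact K → z₀ ∈ K → ∀ δ : ℝ, 0 < δ →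
    ∃ K₁ : Set E, K₁ ⊆ D ∧ IsCompact K₁ ∧ K ⊆ K₁ ∧
      ∀ (U : Set E) (f : E → ℂ), IsOpen U → K₁ ⊆ U → DifferentiableOn ℂ f U →
        supNorm (fun z => f z - f z₀) K ≤ δ * supNorm (fun z => f z - f z₀) K₁

/-- An exhaustion of `D` by relatively compact open sets. -/
def IsExhaustion (Dn : ℕ → Set E) (D : Set E) : Prop :=
  (∀ n, IsOpen (Dn n)) ∧ (∀ n, IsCompact (closure (Dn n))) ∧
    (∀ n, closure (Dn n) ⊆ Dn (n + 1)) ∧ (⋃ n, Dn n) = D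

/-- `gammaFn U z₀ z = sup {|f z| : f analytic on U, f z₀ = 0, sup_U |f| ≤ 1}`. -/
noncomputable def gammaFn (U : Set E) (z₀ z : E) : ℝ :=
  sSup {t : ℝ | ∃ f : E → ℂ, DifferentiableOn ℂ f U ∧ f z₀ = 0 ∧
    (∀ w ∈ U, ‖f w‖ ≤ 1) ∧ t = ‖f z‖}




section Aux

-- one-variable Cauchy estimates packaged
lemma oneVar {φ : ℂ → ℂ} {T M : ℝ} (hT : 3/2 ≤ T) (hM : 0 ≤ M)
    (hφ : DifferentiableOn ℂ φ (ball (0:ℂ) T))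
    (hb : ∀ t ∈ ball (0:ℂ) T, ‖φ t‖ ≤ M) :
    ‖φ 1 - φ 0‖ ≤ 9*M/T ∧ ‖deriv φ 0‖ ≤ 9*M/T ∧
      ‖φ 1 - φ 0 - deriv φ 0‖ ≤ 81*M/T^2 := by
  have hT0 : (0:ℝ) < T := by linarith
  have hρ : (0:ℝ) < T/9 := by linarith
  -- first derivative bound on |t| ≤ 1 + T/9
  have d1 : ∀ t : ℂ, ‖t‖ ≤ 1 + T/9 → ‖deriv φ t‖ ≤ 9*M/T := by
    intro t ht
    have hsub : closedBall t (T/9) ⊆ ball (0:ℂ) T := by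
      intro w hw
      simp only [mem_closedBall, mem_ball] at *
      have : dist w 0 ≤ dist w t + dist t 0 := dist_triangle _ _ _
      have ht' : dist t 0 ≤ 1 + T/9 := by simpa [dist_eq_norm] using ht
      have : dist w 0 ≤ T/9 + (1 + T/9) := by linarith
      linarith
    have := Complex.cderiv_eq_deriv isOpen_ball hφ hρ hsub
    rw [← this]
    have hb' : ∀ w ∈ sphere t (T/9), ‖φ w‖ ≤ M := fun w hw =>
      hb w (hsub (sphere_subset_closedBall hw))
    have := Complex.norm_cderiv_le hρ hb'
    calc ‖Complex.cderiv (T/9) φ t‖ ≤ M / (T/9) := this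
    _ = 9*M/T := by field_simp
  -- deriv φ is differentiable
  have hφd : DifferentiableOn ℂ (deriv φ) (ball (0:ℂ) T) :=
    ((hφ.analyticOnNhd isOpen_ball).deriv).differentiableOn
  -- second derivative bound on |t| ≤ 1
  have d2 : ∀ t : ℂ, ‖t‖ ≤ 1 → ‖deriv (deriv φ) t‖ ≤ 81*M/T^2 := by
    intro t ht
    have hsub : closedBall t (T/9) ⊆ ball (0:ℂ) T := by
      intro w hw
      simp only [mem_closedBall, mem_ball] at *
      have : dist w 0 ≤ dist w t + dist t 0 := dist_triangle _ _ _
      have ht' : dist t 0 ≤ 1 := by simpa [dist_eq_norm] using ht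
      have : dist w 0 ≤ T/9 + 1 := by linarith
      linarith
    have := Complex.cderiv_eq_deriv isOpen_ball hφd hρ hsub
    rw [← this]
    have hb' : ∀ w ∈ sphere t (T/9), ‖deriv φ w‖ ≤ 9*M/T := by
      intro w hw
      apply d1
      have := sphere_subset_closedBall hw
      simp only [mem_closedBall] at this
      have ht' : dist t 0 ≤ 1 := by simpa [dist_eq_norm] using ht
      have : dist w 0 ≤ dist w t + dist t 0 := dist_triangle _ _ _
      have : dist w 0 ≤ T/9 + 1 := by
        linarith [sphere_subset_closedBall hw]
      simpa [dist_eq_norm] using this.trans (by linarith)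
    have := Complex.norm_cderiv_le hρ hb'
    calc ‖Complex.cderiv (T/9) (deriv φ) t‖ ≤ (9*M/T) / (T/9) := this
    _ = 81*M/T^2 := by field_simp; ring
  have hT0 : (0:ℝ) < T := by linarith
  have hφd : DifferentiableOn ℂ (deriv φ) (ball (0:ℂ) T) :=
    ((hφ.analyticOnNhd isOpen_ball).deriv).differentiableOn
  have hmem : ∀ s : ℝ, s ∈ Set.Icc (0:ℝ) 1 → (s:ℂ) ∈ ball (0:ℂ) T := by
    intro s hs
    rw [mem_ball, dist_zero_right]
    have h1 : ‖(s:ℂ)‖ = |s| := by rw [Complex.norm_real, Real.norm_eq_abs]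
    rw [h1, abs_of_nonneg hs.1]
    linarith [hs.2]
  have hda : ∀ s : ℝ, s ∈ Set.Icc (0:ℝ) 1 → HasDerivAt (fun y : ℝ => φ ↑y) (deriv φ ↑s) s := by
    intro s hs
    exact ((hφ.differentiableAt (isOpen_ball.mem_nhds (hmem s hs))).hasDerivAt).comp_ofReal
  have hda2 : ∀ s : ℝ, s ∈ Set.Icc (0:ℝ) 1 →
      HasDerivAt (fun y : ℝ => deriv φ ↑y) (deriv (deriv φ) ↑s) s := by
    intro s hs
    exact ((hφd.differentiableAt (isOpen_ball.mem_nhds (hmem s hs))).hasDerivAt).comp_ofReal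
  have normcast : ∀ s : ℝ, s ∈ Set.Icc (0:ℝ) 1 → ‖(s:ℂ)‖ ≤ 1 := by
    intro s hs
    rw [Complex.norm_real, Real.norm_eq_abs, abs_of_nonneg hs.1]; exact hs.2
  -- first: Lipschitz
  have step1 := norm_image_sub_le_of_norm_deriv_le_segment'
    (f := fun y : ℝ => φ ↑y) (f' := fun y : ℝ => deriv φ ↑y) (C := 9*M/T)
    (fun s hs => (hda s hs).hasDerivWithinAt)
    (fun s hs => d1 _ (by
      have := normcast s ⟨hs.1, hs.2.le⟩; linarith [this]))
    1 ⟨zero_le_one, le_rfl⟩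
  simp only [Complex.ofReal_one, Complex.ofReal_zero, sub_zero, mul_one] at step1
  refine ⟨step1, d1 0 (by simp; positivity), ?_⟩
  -- second derivative control of deriv φ
  have step2 := norm_image_sub_le_of_norm_deriv_le_segment'
    (f := fun y : ℝ => deriv φ ↑y) (f' := fun y : ℝ => deriv (deriv φ) ↑y) (C := 81*M/T^2)
    (fun s hs => (hda2 s hs).hasDerivWithinAt)
    (fun s hs => d2 _ (normcast s ⟨hs.1, hs.2.le⟩))
  -- Taylor remainder
  have step3 := norm_image_sub_le_of_norm_deriv_le_segment'
    (f := fun y : ℝ => φ ↑y - y • deriv φ 0)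
    (f' := fun y : ℝ => deriv φ ↑y - deriv φ 0) (C := 81*M/T^2)
    (fun s hs => ((hda s hs).sub
      (by simpa using (hasDerivAt_id s).smul_const (deriv φ 0))).hasDerivWithinAt)
    (fun s hs => by
      have := step2 s ⟨hs.1, hs.2.le⟩
      simp only [Complex.ofReal_zero, sub_zero] at this
      have h2 : 81*M/T^2 * (s - 0) ≤ 81*M/T^2 := by
        have : (0:ℝ) ≤ 81*M/T^2 := by positivity
        nlinarith [hs.1, hs.2]
      linarith)
    1 ⟨zero_le_one, le_rfl⟩
  simp only [Complex.ofReal_one, Complex.ofReal_zero, zero_smul, sub_zero, one_smul,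
    mul_one] at step3
  rw [sub_right_comm]
  exact step3

lemma mdim {d : ℕ} {f : Cd d → ℂ} {x : Cd d} {r M : ℝ} (hr : 0 < r) (hM : 0 ≤ M)
    (hf : DifferentiableOn ℂ f (ball x (4*r)))
    (hb : ∀ y ∈ ball x (4*r), ‖f y‖ ≤ M)
    {z w : Cd d} (hz : z ∈ closedBall x r) (hw : w ∈ closedBall x r) :
    ‖f w - f z‖ ≤ 3*M/r * ‖w - z‖ ∧
      ‖fderiv ℂ f z (w - z)‖ ≤ 3*M/r * ‖w - z‖ ∧
      ‖f w - f z - fderiv ℂ f z (w - z)‖ ≤ 9*M/r^2 * ‖w - z‖^2 := by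
  rcases eq_or_ne w z with rfl | hwz
  · simp [map_zero]
  set v := w - z with hv
  have hv0 : v ≠ 0 := sub_ne_zero.mpr hwz
  have hvn : 0 < ‖v‖ := norm_pos_iff.mpr hv0
  have hv2r : ‖v‖ ≤ 2*r := by
    have h1 : dist w x ≤ r := mem_closedBall.mp hw
    have h2 : dist z x ≤ r := mem_closedBall.mp hz
    calc ‖v‖ = dist w z := (dist_eq_norm w z).symm
    _ ≤ dist w x + dist x z := dist_triangle _ _ _
    _ ≤ r + r := by rw [dist_comm x z]; exact add_le_add h1 h2
    _ = 2*r := by ring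
  set T : ℝ := 3*r/‖v‖ with hT
  have hT32 : 3/2 ≤ T := by
    rw [hT, le_div_iff₀ hvn]; linarith
  have hxz : dist z x ≤ r := mem_closedBall.mp hz
  -- membership of the slice
  have hmem : ∀ t : ℂ, t ∈ ball (0:ℂ) T → z + t • v ∈ ball x (4*r) := by
    intro t ht
    rw [mem_ball, dist_zero_right] at ht
    rw [mem_ball]
    calc dist (z + t • v) x ≤ dist (z + t • v) z + dist z x := dist_triangle _ _ _
    _ = ‖t • v‖ + dist z x := by rw [dist_eq_norm, add_sub_cancel_left]
    _ ≤ ‖t‖*‖v‖ + r := by rw [norm_smul]; exact add_le_add le_rfl hxz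
    _ < T*‖v‖ + r := by
        have := mul_lt_mul_of_pos_right ht hvn
        linarith
    _ = 4*r := by rw [hT]; field_simp; ring
  set φ : ℂ → ℂ := fun t => f (z + t • v) with hφdef
  have hline : Differentiable ℂ (fun t : ℂ => z + t • v) := by
    apply Differentiable.const_add
    exact fun t => ((hasDerivAt_id t).smul_const v).differentiableAt
  have hφ : DifferentiableOn ℂ φ (ball (0:ℂ) T) := by
    apply DifferentiableOn.comp hf (hline.differentiableOn)
    intro t ht; exact hmem t ht
  have hbφ : ∀ t ∈ ball (0:ℂ) T, ‖φ t‖ ≤ M := fun t ht => hb _ (hmem t ht)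
  have key := oneVar hT32 hM hφ hbφ
  -- identify φ 1, φ 0, deriv φ 0
  have e1 : φ 1 = f w := by simp [hφdef, hv]
  have e0 : φ 0 = f z := by simp [hφdef]
  have ederiv : deriv φ 0 = fderiv ℂ f z v := by
    have hfz : DifferentiableAt ℂ f z := hf.differentiableAt
      (isOpen_ball.mem_nhds (by rw [mem_ball]; linarith))
    have hψ : HasDerivAt (fun t : ℂ => z + t • v) v 0 := by
      simpa using ((hasDerivAt_id (0:ℂ)).smul_const v).const_add z
    have hcomp : HasDerivAt (f ∘ fun t : ℂ => z + t • v) (fderiv ℂ f z v) 0 :=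
      HasFDerivAt.comp_hasDerivAt 0 (by simpa using hfz.hasFDerivAt) hψ
    have : HasDerivAt φ (fderiv ℂ f z v) 0 := by
      simpa [hφdef, Function.comp_def] using hcomp
    exact this.deriv
  have harith1 : 9*M/T = 3*M/r * ‖v‖ := by rw [hT]; field_simp; ring
  have harith2 : 81*M/T^2 = 9*M/r^2 * ‖v‖^2 := by rw [hT]; field_simp; ring
  refine ⟨?_, ?_, ?_⟩
  · rw [← e1, ← e0, ← harith1]; exact key.1
  · rw [← ederiv, ← harith1]; exact key.2.1
  · rw [← e1, ← e0, ← ederiv, ← harith2]; exact key.2.2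

lemma opnorm {d : ℕ} {f : Cd d → ℂ} {x : Cd d} {r M : ℝ} (hr : 0 < r) (hM : 0 ≤ M)
    (hf : DifferentiableOn ℂ f (ball x (4*r)))
    (hb : ∀ y ∈ ball x (4*r), ‖f y‖ ≤ M) :
    ‖fderiv ℂ f x‖ ≤ 3*M/r := by
  apply ContinuousLinearMap.opNorm_le_bound _ (by positivity)
  intro v
  rcases eq_or_ne v 0 with rfl | hv0
  · simp
  have hvn : 0 < ‖v‖ := norm_pos_iff.mpr hv0
  set c : ℂ := ((r/‖v‖ : ℝ) : ℂ) with hc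
  have hcn : ‖c‖ = r/‖v‖ := by
    rw [hc, Complex.norm_real, Real.norm_eq_abs, abs_of_nonneg (by positivity)]
  set w : Cd d := x + c • v with hw
  have hwx : w - x = c • v := by rw [hw]; abel
  have hnwx : ‖w - x‖ = r := by
    rw [hwx, norm_smul, hcn]; field_simp
  have hwmem : w ∈ closedBall x r := by
    rw [mem_closedBall, dist_eq_norm, hnwx]
  have key := (mdim hr hM hf hb (mem_closedBall_self hr.le) hwmem).2.1
  rw [hwx, map_smul, norm_smul, hcn, norm_smul, hcn] at key
  have hcv : r / ‖v‖ * ‖v‖ = r := by field_simp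
  rw [hcv] at key
  -- key : (r/‖v‖) * ‖fderiv ℂ f x v‖ ≤ 3*M/r * r
  have h1 : r/‖v‖ * ‖fderiv ℂ f x v‖ ≤ 3*M := by
    calc r/‖v‖ * ‖fderiv ℂ f x v‖ ≤ 3*M/r * r := key
    _ = 3*M := by field_simp
  rw [div_mul_eq_mul_div, div_le_iff₀ hvn] at h1
  calc ‖fderiv ℂ f x v‖ = (r * ‖fderiv ℂ f x v‖)/r := by field_simp
  _ ≤ (3*M*‖v‖)/r := by gcongr
  _ = 3*M/r * ‖v‖ := by ring

lemma schwarzStep {d : ℕ} {D : Set (Cd d)} (hD : IsOpen D) (hL : LiouvilleProperty D)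
    {z₀ : Cd d} {K : Set (Cd d)} (hK : IsCompact K) (hKD : K ⊆ D) (hz₀K : z₀ ∈ K)
    {δ : ℝ} (hδ : 0 < δ) :
    ∃ K₁ : Set (Cd d), IsCompact K₁ ∧ K₁ ⊆ D ∧ K ⊆ K₁ ∧
      ∀ (U : Set (Cd d)) (f : Cd d → ℂ), IsOpen U → K₁ ⊆ U → DifferentiableOn ℂ f U →
        f z₀ = 0 → ∀ M : ℝ, (∀ w ∈ K₁, ‖f w‖ ≤ M) → ∀ z ∈ K, ‖f z‖ ≤ δ * M := by
  by_contra hcon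
  push_neg at hcon
  -- the exhaustion
  set L : ℕ → Set (Cd d) :=
    fun n => K ∪ {z | ‖z‖ ≤ n ∧ ((n:ENNReal)+1)⁻¹ ≤ EMetric.infEdist z Dᶜ} with hLdef
  set V : ℕ → Set (Cd d) :=
    fun n => {z | ‖z‖ < n ∧ ((n:ENNReal)+1)⁻¹ < EMetric.infEdist z Dᶜ} with hVdef
  have hLclosed : ∀ n : ℕ, IsClosed {z : Cd d | ‖z‖ ≤ (n:ℝ) ∧ ((n:ENNReal)+1)⁻¹ ≤ EMetric.infEdist z Dᶜ} := by
    intro n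
    have h1 : IsClosed {z : Cd d | ‖z‖ ≤ (n:ℝ)} :=
      isClosed_le continuous_norm continuous_const
    have h2 : IsClosed {z : Cd d | ((n:ENNReal)+1)⁻¹ ≤ EMetric.infEdist z Dᶜ} :=
      IsClosed.preimage EMetric.continuous_infEdist isClosed_Ici
    exact h1.inter h2
  have hLcompact : ∀ n, IsCompact (L n) := by
    intro n
    refine hK.union ?_
    refine (isCompact_closedBall (0 : Cd d) n).of_isClosed_subset (hLclosed n) ?_
    intro z hz
    simpa [mem_closedBall, dist_zero_right] using hz.1
  have hLD : ∀ n, L n ⊆ D := by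
    intro n z hz
    rcases hz with hz | hz
    · exact hKD hz
    · by_contra hzD
      have h0 : EMetric.infEdist z Dᶜ = 0 := EMetric.infEdist_zero_of_mem hzD
      have h2 := hz.2
      rw [h0, le_zero_iff, ENNReal.inv_eq_zero] at h2
      exact (ENNReal.add_lt_top.mpr ⟨ENNReal.natCast_lt_top n, ENNReal.one_lt_top⟩).ne h2
  have hKL : ∀ n, K ⊆ L n := fun n => Set.subset_union_left
  have hVopen : ∀ n, IsOpen (V n) := by
    intro n
    have h1 : IsOpen {z : Cd d | ‖z‖ < (n:ℝ)} := isOpen_lt continuous_norm continuous_const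
    have h2 : IsOpen {z : Cd d | ((n:ENNReal)+1)⁻¹ < EMetric.infEdist z Dᶜ} :=
      IsOpen.preimage EMetric.continuous_infEdist isOpen_Ioi
    exact h1.inter h2
  have hVL : ∀ n, V n ⊆ L n := by
    intro n z hz
    exact Or.inr ⟨hz.1.le, hz.2.le⟩
  have hVmono : ∀ m n, m ≤ n → V m ⊆ V n := by
    intro m n hmn z hz
    constructor
    · exact lt_of_lt_of_le hz.1 (by exact_mod_cast hmn)
    · refine lt_of_le_of_lt ?_ hz.2
      exact ENNReal.inv_le_inv.mpr (by
        exact add_le_add (by exact_mod_cast hmn) le_rfl)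
  have hDV : D ⊆ ⋃ n, V n := by
    intro z hz
    have hpos : 0 < EMetric.infEdist z Dᶜ := by
      refine EMetric.infEdist_pos_iff_notMem_closure.mpr ?_
      rw [hD.isClosed_compl.closure_eq]
      simpa using hz
    obtain ⟨n₁, hn₁⟩ := ENNReal.exists_inv_nat_lt hpos.ne'
    obtain ⟨n₂, hn₂⟩ := exists_nat_gt ‖z‖
    refine Set.mem_iUnion.mpr ⟨n₁ + n₂, ?_, ?_⟩
    · exact lt_of_lt_of_le hn₂ (by exact_mod_cast Nat.le_add_left n₂ n₁)
    · refine lt_of_le_of_lt ?_ hn₁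
      refine ENNReal.inv_le_inv.mpr ?_
      have : (n₁ : ENNReal) ≤ (↑(n₁ + n₂) : ENNReal) := by exact_mod_cast Nat.le_add_right n₁ n₂
      calc (n₁ : ENNReal) ≤ (↑(n₁+n₂) : ENNReal) := this
      _ ≤ (↑(n₁+n₂) : ENNReal) + 1 := le_self_add
  have hcomp : ∀ C : Set (Cd d), IsCompact C → C ⊆ D → ∃ N, ∀ n, N ≤ n → C ⊆ L n := by
    intro C hC hCD
    obtain ⟨s, hs⟩ := hC.elim_finite_subcover V hVopen (hCD.trans hDV)
    refine ⟨s.sup id, fun n hn z hz => ?_⟩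
    obtain ⟨i, hi, hzi⟩ := Set.mem_iUnion₂.mp (hs hz)
    exact hVL n (hVmono i n ((Finset.le_sup (f := id) hi).trans hn) hzi)
  -- choose functions violating the Schwarz bound on each L n
  have hsel : ∀ n : ℕ, ∃ g : Cd d → ℂ, ∃ U : Set (Cd d), IsOpen U ∧ L n ⊆ U ∧
      DifferentiableOn ℂ g U ∧ g z₀ = 0 ∧ (∀ w ∈ L n, ‖g w‖ ≤ 1) ∧
      ∃ z ∈ K, δ < ‖g z‖ := by
    intro n
    obtain ⟨U, f, hUopen, hLU, hfdiff, hfz₀, M, hfM, z, hzK, hδM⟩ :=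
      hcon (L n) (hLcompact n) (hLD n) (hKL n)
    have hM0 : 0 ≤ M := le_trans (norm_nonneg _) (hfM z (hKL n hzK))
    have hMpos : 0 < M := by
      rcases eq_or_lt_of_le hM0 with rfl | h
      · exfalso
        have := hfM z (hKL n hzK)
        simp only [mul_zero] at hδM
        exact absurd (le_antisymm this (norm_nonneg _)) (by
          intro he
          rw [he] at hδM
          exact lt_irrefl 0 hδM)
      · exact h
    refine ⟨fun y => (M⁻¹ : ℝ) • f y, U, hUopen, hLU, hfdiff.const_smul (M⁻¹ : ℝ), by simp [hfz₀], ?_, z, hzK, ?_⟩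
    · intro w hw
      rw [norm_smul, Real.norm_eq_abs, abs_of_nonneg (by positivity : (0:ℝ) ≤ M⁻¹)]
      calc M⁻¹ * ‖f w‖ ≤ M⁻¹ * M := by
            exact mul_le_mul_of_nonneg_left (hfM w hw) (by positivity)
      _ = 1 := by field_simp
    · rw [norm_smul, Real.norm_eq_abs, abs_of_nonneg (by positivity : (0:ℝ) ≤ M⁻¹)]
      rw [lt_inv_mul_iff₀ hMpos] -- hope: δ < M⁻¹ * ‖f z‖ ↔ M * δ < ‖f z‖
      linarith [hδM]
  choose g U hUopen hLU hgdiff hgz₀ hgb z hzK hgz using hsel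
  -- ultrafilter
  set 𝒰 : Ultrafilter ℕ := Ultrafilter.of atTop with h𝒰def
  have h𝒰 : (𝒰 : Filter ℕ) ≤ atTop := Ultrafilter.of_le _
  have hevC : ∀ C : Set (Cd d), IsCompact C → C ⊆ D → ∀ᶠ n in (𝒰 : Filter ℕ), C ⊆ L n := by
    intro C hC hCD
    obtain ⟨N, hN⟩ := hcomp C hC hCD
    exact h𝒰 (eventually_atTop.mpr ⟨N, hN⟩)
  -- the limit function
  have : Nonempty ℂ := ⟨0⟩
  set F : Cd d → ℂ := fun y => lim (Filter.map (fun n => g n y) (𝒰 : Filter ℕ)) with hFdef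
  have hconv : ∀ y ∈ D, Tendsto (fun n => g n y) (𝒰 : Filter ℕ) (𝓝 (F y)) := by
    intro y hy
    have hev : ∀ᶠ n in (𝒰 : Filter ℕ), g n y ∈ closedBall (0:ℂ) 1 := by
      filter_upwards [hevC {y} isCompact_singleton (Set.singleton_subset_iff.mpr hy)] with n hn
      simpa [mem_closedBall, dist_zero_right] using hgb n y (hn rfl)
    have hle : (Ultrafilter.map (fun n => g n y) 𝒰 : Filter ℂ) ≤ Filter.principal (closedBall (0:ℂ) 1) := by
      rw [le_principal_iff]
      exact hev
    obtain ⟨a, _, ha⟩ := (isCompact_closedBall (0:ℂ) 1).ultrafilter_le_nhds _ hle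
    exact le_nhds_lim ⟨a, ha⟩
  have hFb : ∀ y ∈ D, ‖F y‖ ≤ 1 := by
    intro y hy
    refine le_of_tendsto (hconv y hy).norm ?_
    filter_upwards [hevC {y} isCompact_singleton (Set.singleton_subset_iff.mpr hy)] with n hn
    exact hgb n y (hn rfl)
  have hFz₀ : F z₀ = 0 := by
    refine tendsto_nhds_unique (hconv z₀ (hKD hz₀K)) ?_
    have : (fun n => g n z₀) = fun _ => (0:ℂ) := funext fun n => hgz₀ n
    rw [this]
    exact tendsto_const_nhds
  -- differentiability of F
  have hFdiff : DifferentiableOn ℂ F D := by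
    intro x hx
    obtain ⟨ε, hε, hball⟩ := Metric.isOpen_iff.mp hD x hx
    set r : ℝ := ε/8 with hrdef
    have hr : 0 < r := by positivity
    have hsub : closedBall x (4*r) ⊆ D := by
      refine Set.Subset.trans ?_ hball
      intro y hy
      rw [mem_closedBall] at hy
      rw [mem_ball]
      calc dist y x ≤ 4*r := hy
      _ < ε := by rw [hrdef]; linarith
    have hev : ∀ᶠ n in (𝒰 : Filter ℕ), closedBall x (4*r) ⊆ L n :=
      hevC _ (isCompact_closedBall _ _) hsub
    -- fderiv limit
    haveI : ProperSpace ((Cd d) →L[ℂ] ℂ) := FiniteDimensional.proper ℂ _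
    have hopev : ∀ᶠ n in (𝒰 : Filter ℕ), fderiv ℂ (g n) x ∈ closedBall (0 : (Cd d) →L[ℂ] ℂ) (3/r) := by
      filter_upwards [hev] with n hn
      rw [mem_closedBall, dist_zero_right]
      have hdiff : DifferentiableOn ℂ (g n) (ball x (4*r)) :=
        (hgdiff n).mono ((ball_subset_closedBall.trans hn).trans (hLU n))
      have hbd : ∀ y ∈ ball x (4*r), ‖g n y‖ ≤ 1 := fun y hy =>
        hgb n y (hn (ball_subset_closedBall hy))
      have := opnorm hr zero_le_one hdiff hbd
      simpa using this
    have hle : (Ultrafilter.map (fun n => fderiv ℂ (g n) x) 𝒰 : Filter _) ≤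
        Filter.principal (closedBall (0 : (Cd d) →L[ℂ] ℂ) (3/r)) := le_principal_iff.mpr hopev
    obtain ⟨A, _, hA⟩ := (isCompact_closedBall (0 : (Cd d) →L[ℂ] ℂ) (3/r)).ultrafilter_le_nhds _ hle
    have hAconv : Tendsto (fun n => fderiv ℂ (g n) x) (𝒰 : Filter ℕ) (𝓝 A) := hA
    -- quadratic estimate in the limit
    have hquad : ∀ w ∈ closedBall x r, ‖F w - F x - A (w - x)‖ ≤ 9/r^2 * ‖w - x‖^2 := by
      intro w hw
      have hwD : w ∈ D := hsub (closedBall_subset_closedBall (by linarith) hw)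
      have hxD : x ∈ D := hx
      have htend : Tendsto (fun n => ‖g n w - g n x - fderiv ℂ (g n) x (w - x)‖)
          (𝒰 : Filter ℕ) (𝓝 (‖F w - F x - A (w - x)‖)) := by
        refine Tendsto.norm ?_
        refine Tendsto.sub (Tendsto.sub (hconv w hwD) (hconv x hxD)) ?_
        exact ((ContinuousLinearMap.apply ℂ ℂ (w - x)).continuous.tendsto A).comp hAconv
      refine le_of_tendsto htend ?_
      filter_upwards [hev] with n hn
      have hdiff : DifferentiableOn ℂ (g n) (ball x (4*r)) :=
        (hgdiff n).mono ((ball_subset_closedBall.trans hn).trans (hLU n))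
      have hbd : ∀ y ∈ ball x (4*r), ‖g n y‖ ≤ 1 := fun y hy =>
        hgb n y (hn (ball_subset_closedBall hy))
      have := (mdim hr zero_le_one hdiff hbd (mem_closedBall_self hr.le) hw).2.2
      calc ‖g n w - g n x - fderiv ℂ (g n) x (w - x)‖ ≤ 9*1/r^2 * ‖w - x‖^2 := this
      _ = 9/r^2 * ‖w - x‖^2 := by ring
    have hder : HasFDerivAt F A x := by
      rw [hasFDerivAt_iff_isLittleO]
      have hbig : (fun w => F w - F x - A (w - x)) =O[𝓝 x] (fun w => ‖w - x‖^2) := by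
        refine Asymptotics.IsBigO.of_bound (9/r^2) ?_
        filter_upwards [closedBall_mem_nhds x hr] with w hw
        have := hquad w hw
        calc ‖F w - F x - A (w - x)‖ ≤ 9/r^2 * ‖w - x‖^2 := this
        _ = 9/r^2 * ‖‖w - x‖^2‖ := by rw [Real.norm_eq_abs, abs_of_nonneg (by positivity)]
      have hsmall : (fun w : Cd d => ‖w - x‖^2) =o[𝓝 x] (fun w => w - x) := by
        rw [Asymptotics.isLittleO_iff]
        intro c hc
        filter_upwards [closedBall_mem_nhds x hc] with w hw
        rw [mem_closedBall, dist_eq_norm] at hw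
        rw [Real.norm_eq_abs, abs_of_nonneg (by positivity : (0:ℝ) ≤ ‖w - x‖^2)]
        calc ‖w - x‖^2 = ‖w - x‖ * ‖w - x‖ := sq ‖w - x‖
        _ ≤ c * ‖w - x‖ := by
            exact mul_le_mul_of_nonneg_right hw (norm_nonneg _)
      exact hbig.trans_isLittleO hsmall
    exact hder.differentiableAt.differentiableWithinAt
  -- the limit point of the witnesses z n ∈ K
  have hzprin : (Ultrafilter.map z 𝒰 : Filter (Cd d)) ≤ Filter.principal K := by
    rw [Ultrafilter.coe_map]
    exact le_principal_iff.mpr (mem_map.mpr (univ_mem' hzK))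
  obtain ⟨zs, hzsK, hzs'⟩ := hK.ultrafilter_le_nhds _ hzprin
  have hzs : Tendsto z (𝒰 : Filter ℕ) (𝓝 zs) := hzs'
  have hzsD : zs ∈ D := hKD hzsK
  -- δ ≤ ‖F zs‖
  have hδF : δ ≤ ‖F zs‖ := by
    obtain ⟨ε, hε, hball⟩ := Metric.isOpen_iff.mp hD zs hzsD
    set r : ℝ := ε/8 with hrdef
    have hr : 0 < r := by positivity
    have hsub : closedBall zs (4*r) ⊆ D := by
      refine Set.Subset.trans ?_ hball
      intro y hy
      rw [mem_closedBall] at hy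
      rw [mem_ball]
      calc dist y zs ≤ 4*r := hy
      _ < ε := by rw [hrdef]; linarith
    have hev1 : ∀ᶠ n in (𝒰 : Filter ℕ), closedBall zs (4*r) ⊆ L n :=
      hevC _ (isCompact_closedBall _ _) hsub
    have hev2 : ∀ᶠ n in (𝒰 : Filter ℕ), z n ∈ closedBall zs r :=
      hzs (closedBall_mem_nhds zs hr)
    have htends : Tendsto (fun n => ‖g n zs‖ + 3/r * ‖z n - zs‖) (𝒰 : Filter ℕ)
        (𝓝 (‖F zs‖ + 3/r * ‖zs - zs‖)) := by
      refine Tendsto.add (hconv zs hzsD).norm ?_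
      exact (((hzs.sub tendsto_const_nhds).norm).const_mul (3/r))
    rw [sub_self, norm_zero, mul_zero, add_zero] at htends
    refine ge_of_tendsto htends ?_
    filter_upwards [hev1, hev2] with n hn1 hn2
    have hdiff : DifferentiableOn ℂ (g n) (ball zs (4*r)) :=
      (hgdiff n).mono ((ball_subset_closedBall.trans hn1).trans (hLU n))
    have hbd : ∀ y ∈ ball zs (4*r), ‖g n y‖ ≤ 1 := fun y hy =>
      hgb n y (hn1 (ball_subset_closedBall hy))
    have hlip := (mdim hr zero_le_one hdiff hbd (mem_closedBall_self hr.le) hn2).1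
    -- hlip : ‖g n (z n) - g n zs‖ ≤ 3*1/r * ‖z n - zs‖
    have h1 : ‖g n (z n)‖ ≤ ‖g n zs‖ + 3/r * ‖z n - zs‖ := by
      calc ‖g n (z n)‖ = ‖g n zs + (g n (z n) - g n zs)‖ := by ring_nf
      _ ≤ ‖g n zs‖ + ‖g n (z n) - g n zs‖ := norm_add_le _ _
      _ ≤ ‖g n zs‖ + 3/r * ‖z n - zs‖ := by
          refine add_le_add le_rfl ?_
          calc ‖g n (z n) - g n zs‖ ≤ 3*1/r * ‖z n - zs‖ := hlip
          _ = 3/r * ‖z n - zs‖ := by ring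
    linarith [hgz n]
  -- contradiction with Liouville
  have := hL F hFdiff ⟨1, hFb⟩ z₀ (hKD hz₀K) zs hzsD
  rw [hFz₀] at this
  rw [← this, norm_zero] at hδF
  linarith


end Aux

/-- Borel–Carathéodory for Liouville domains: if `D ⊆ ℂ^d` is a domain
with the Liouville Property, `z₀ ∈ K ⊆ D` with `K` compact, and `ε > 0`, then there is a
compact `K₁ ⊆ D` with `sup_K |f - f(z₀)| ≤ ε ⬝ sup_{K₁} Re(f - f(z₀))` for every `f`
analytic on an open neighborhood of `K₁`. -/
theorem stmt15 (d : ℕ) (D : Set (Cd d)) (hD : IsOpen D) (hDconn : IsConnected D)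
    (hL : LiouvilleProperty D) (z₀ : Cd d) (K : Set (Cd d)) (hK : IsCompact K)
    (hKD : K ⊆ D) (hz₀K : z₀ ∈ K) (ε : ℝ) (hε : 0 < ε) :
    ∃ K₁ : Set (Cd d), IsCompact K₁ ∧ K₁ ⊆ D ∧ K ⊆ K₁ ∧
      ∀ (U : Set (Cd d)) (f : Cd d → ℂ), IsOpen U → K₁ ⊆ U → DifferentiableOn ℂ f U →
        supNorm (fun z => f z - f z₀) K ≤
          ε * sSup ((fun z => (f z - f z₀).re) '' K₁) := by
  set δ : ℝ := ε / (2 + ε) with hδdef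
  have hδ : 0 < δ := by positivity
  obtain ⟨K₁, hK₁c, hK₁D, hKK₁, hS⟩ := schwarzStep hD hL hK hKD hz₀K hδ
  refine ⟨K₁, hK₁c, hK₁D, hKK₁, ?_⟩
  intro U f hU hK₁U hf
  set g : Cd d → ℂ := fun y => f y - f z₀ with hgdef
  have hz₀K₁ : z₀ ∈ K₁ := hKK₁ hz₀K
  have hgdiff : DifferentiableOn ℂ g U := hf.sub (differentiableOn_const _)
  have hgcont : ContinuousOn g U := hgdiff.continuousOn
  have hrecont : ContinuousOn (fun y => (g y).re) K₁ :=
    (Complex.continuous_re.comp_continuousOn (hgcont.mono hK₁U))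
  set A : ℝ := sSup ((fun y => (g y).re) '' K₁) with hAdef
  have himg : IsCompact ((fun y => (g y).re) '' K₁) := hK₁c.image_of_continuousOn hrecont
  have hbdd : BddAbove ((fun y => (g y).re) '' K₁) := himg.bddAbove
  have hA0 : 0 ≤ A := by
    refine le_csSup hbdd ⟨z₀, hz₀K₁, ?_⟩
    simp [hgdef]
  have hAub : ∀ w ∈ K₁, (g w).re ≤ A := fun w hw => le_csSup hbdd ⟨w, hw, rfl⟩
  -- the key estimate for any a ≥ A, a > 0
  have key : ∀ a : ℝ, 0 < a → A ≤ a → ∀ z ∈ K, ‖g z‖ ≤ ε * a := by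
    intro a ha hAa
    set h : Cd d → ℂ := fun y => g y / ((2*a : ℝ) - g y) with hhdef
    set V : Set (Cd d) := U ∩ (fun y => (g y).re) ⁻¹' Set.Iio (2*a) with hVdef
    have hVopen : IsOpen V := by
      refine ContinuousOn.isOpen_inter_preimage ?_ hU isOpen_Iio
      exact Complex.continuous_re.comp_continuousOn hgcont
    have hK₁V : K₁ ⊆ V := by
      intro w hw
      refine ⟨hK₁U hw, ?_⟩
      have := hAub w hw
      simp only [Set.mem_preimage, Set.mem_Iio]
      linarith
    have hdenom : ∀ y ∈ V, ((2*a : ℝ) : ℂ) - g y ≠ 0 := by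
      intro y hy h0
      have h1 : (((2*a : ℝ) : ℂ) - g y).re = 0 := by rw [h0]; simp
      have h2 : (g y).re < 2*a := hy.2
      simp only [Complex.sub_re, Complex.ofReal_re] at h1
      linarith
    have hhdiff : DifferentiableOn ℂ h V := by
      have h1 : DifferentiableOn ℂ g V := hgdiff.mono Set.inter_subset_left
      have h2 : DifferentiableOn ℂ (fun y => ((2*a : ℝ) : ℂ) - g y) V :=
        (differentiableOn_const _).sub h1
      show DifferentiableOn ℂ (fun y => g y / (((2*a : ℝ) : ℂ) - g y)) V
      simp only [div_eq_mul_inv]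
      exact h1.mul (h2.inv hdenom)
    have hh0 : h z₀ = 0 := by simp [hhdef, hgdef]
    have hhb : ∀ w ∈ K₁, ‖h w‖ ≤ 1 := by
      intro w hw
      have hwV : w ∈ V := hK₁V hw
      have hden := hdenom w hwV
      have esq : ∀ u : ℂ, ‖u‖^2 = u.re^2 + u.im^2 := by
        intro u
        rw [Complex.sq_norm, Complex.normSq_apply]
        ring
      have hsq : ‖g w‖^2 ≤ ‖((2*a : ℝ) : ℂ) - g w‖^2 := by
        rw [esq, esq]
        simp only [Complex.sub_re, Complex.sub_im, Complex.ofReal_re, Complex.ofReal_im,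
          zero_sub]
        have hre := hAub w hw
        nlinarith [hre, hAa, ha]
      have hle : ‖g w‖ ≤ ‖((2*a : ℝ) : ℂ) - g w‖ := by
        nlinarith [norm_nonneg (g w), norm_nonneg (((2*a : ℝ) : ℂ) - g w)]
      rw [hhdef]
      simp only
      rw [norm_div]
      have hdpos : 0 < ‖((2*a : ℝ) : ℂ) - g w‖ := norm_pos_iff.mpr hden
      rw [div_le_one hdpos]
      exact hle
    have hsmall := hS V h hVopen hK₁V hhdiff hh0 1 hhb
    intro z hz
    have hzV : z ∈ V := hK₁V (hKK₁ hz)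
    have hden := hdenom z hzV
    have hgz_eq : g z = h z * (((2*a : ℝ) : ℂ) - g z) := by
      rw [hhdef]
      exact (div_mul_cancel₀ (g z) hden).symm
    have hdle : ‖((2*a : ℝ) : ℂ) - g z‖ ≤ 2*a + ‖g z‖ := by
      calc ‖((2*a : ℝ) : ℂ) - g z‖ ≤ ‖((2*a : ℝ) : ℂ)‖ + ‖g z‖ := norm_sub_le _ _
      _ = 2*a + ‖g z‖ := by
          rw [Complex.norm_real, Real.norm_eq_abs, abs_of_nonneg (by positivity)]
    have hbound : ‖g z‖ ≤ δ * (2*a + ‖g z‖) := by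
      calc ‖g z‖ = ‖h z * (((2*a : ℝ) : ℂ) - g z)‖ := by rw [← hgz_eq]
      _ = ‖h z‖ * ‖((2*a : ℝ) : ℂ) - g z‖ := norm_mul _ _
      _ ≤ (δ*1) * (2*a + ‖g z‖) := by
          refine mul_le_mul (hsmall z hz) hdle (norm_nonneg _) ?_
          positivity
      _ = δ * (2*a + ‖g z‖) := by ring
    have h2ε : 0 < 2 + ε := by linarith
    rw [hδdef] at hbound
    rw [div_mul_eq_mul_div, le_div_iff₀ h2ε] at hbound
    nlinarith [hbound]
  -- conclude
  have hfinal : ∀ z ∈ K, ‖g z‖ ≤ ε * A := by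
    intro z hz
    rcases hA0.lt_or_eq with hA | hA
    · exact key A hA le_rfl z hz
    · rw [← hA, mul_zero]
      refine le_of_forall_pos_le_add ?_
      intro c hc
      have := key (c/ε) (by positivity) (by rw [← hA]; positivity) z hz
      rw [mul_div_cancel₀ _ hε.ne'] at this
      linarith
  rw [supNorm]
  refine Real.sSup_le ?_ (by positivity)
  rintro t ⟨y, hy, rfl⟩
  exact hfinal y hy
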